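/- (Lemma 4.3) Let the sequences {x_k^t}, {x_0^t}, {y^t} be generated by the flexible ADMM (Algorithm 4) for the sharing problem, with an arbitrary choice of index sets C^{t+1}, and suppose Assumption C holds. Then for every t ≥ 1: L({x_k^{t+1}}, x_0^{t+1}; y^{t+1}) ≥ Σ_{k=1}^K g_k(x_k^{t+1}) + ℓ(Σ_{k=1}^K A_k x_k^{t+1}) + ((ρ − L)/2)‖x_0^{t+1} − Σ_{k=1}^K A_k x_k^{t+1}‖² ≥ f̄; consequently the sequence t ↦ L({x_k^t}, x_0^t; y^t) is nonincreasing for t ≥ 1 and converges to a limit that is greater than or equal to f̄. -/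

import Mathlib

open Filter
open scoped RealInnerProductSpace BigOperators
open Topology InnerProductSpace

section aux
variable {F : Type*} [NormedAddCommGroup F] [InnerProductSpace ℝ F] [CompleteSpace F]

lemma aux_gradInner (b z : F) : HasGradientAt (fun w => ⟪b, w⟫) b z := by
  rw [hasGradientAt_iff_hasFDerivAt]
  have : (toDual ℝ F b : F →L[ℝ] ℝ) = innerSL ℝ b := by
    ext w; simp [toDual_apply_apply]
  rw [this]
  exact (innerSL ℝ b).hasFDerivAt

lemma aux_gradQuad (c : ℝ) (u z : F) :
    HasGradientAt (fun w => c / 2 * ‖w - u‖ ^ 2) (c • (z - u)) z := by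
  rw [hasGradientAt_iff_hasFDerivAt]
  have h1 : HasFDerivAt (fun w : F => w - u) (ContinuousLinearMap.id ℝ F) z :=
    (hasFDerivAt_id z).sub_const u
  have h2 := (h1.inner (𝕜 := ℝ) h1).const_mul (c / 2)
  have h3 : ∀ w : F, c / 2 * ‖w - u‖ ^ 2 = c / 2 * ⟪w - u, w - u⟫ := by
    intro w; rw [real_inner_self_eq_norm_sq]
  have h4 : (toDual ℝ F (c • (z - u)) : F →L[ℝ] ℝ)
      = (c / 2) • ((fderivInnerCLM ℝ ((fun w : F => w - u) z, (fun w : F => w - u) z)).comp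
        ((ContinuousLinearMap.id ℝ F).prod (ContinuousLinearMap.id ℝ F))) := by
    ext w
    simp only [toDual_apply_apply, ContinuousLinearMap.smul_apply, ContinuousLinearMap.comp_apply,
      ContinuousLinearMap.prod_apply, ContinuousLinearMap.id_apply, fderivInnerCLM_apply,
      smul_eq_mul, real_inner_smul_left]
    rw [real_inner_comm w (z - u)]; ring
  rw [funext h3, h4]
  exact h2

lemma aux_gradAdd {f g : F → ℝ} {a b z : F} (hf : HasGradientAt f a z)
    (hg : HasGradientAt g b z) : HasGradientAt (fun w => f w + g w) (a + b) z := by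
  rw [hasGradientAt_iff_hasFDerivAt] at hf hg ⊢
  rw [map_add]
  exact hf.add hg

lemma aux_gradSub {f g : F → ℝ} {a b z : F} (hf : HasGradientAt f a z)
    (hg : HasGradientAt g b z) : HasGradientAt (fun w => f w - g w) (a - b) z := by
  rw [hasGradientAt_iff_hasFDerivAt] at hf hg ⊢
  rw [map_sub]
  exact hf.sub hg

lemma aux_gradZero {f : F → ℝ} {a g0 : F} (hg : HasGradientAt f g0 a)
    (hmin : ∀ z, f a ≤ f z) : g0 = 0 := by
  have h0 : IsLocalMin f a := Filter.Eventually.of_forall fun z => hmin z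
  have h1 := h0.hasFDerivAt_eq_zero hg.hasFDerivAt
  have h2 := congrArg (fun T => (toDual ℝ F).symm T) h1
  simpa using h2

lemma aux_descent {f : F → ℝ} {f' : F → F} (hgrad : ∀ z, HasGradientAt f (f' z) z)
    {L : ℝ} (hL : 0 ≤ L) (hLip : ∀ u v, ‖f' u - f' v‖ ≤ L * ‖u - v‖) (u v : F) :
    f u ≤ f v + ⟪f' v, u - v⟫ + L / 2 * ‖u - v‖ ^ 2 := by
  set d := u - v with hd
  have hgradH : ∀ z : F, HasGradientAt (fun w => L / 2 * ‖w‖ ^ 2 - f w) (L • z - f' z) z := by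
    intro z
    have h1 : HasGradientAt (fun w : F => L / 2 * ‖w - 0‖ ^ 2) (L • (z - 0)) z :=
      aux_gradQuad L 0 z
    simp only [sub_zero] at h1
    exact aux_gradSub h1 (hgrad z)
  set φ : ℝ → ℝ := fun s => L / 2 * ‖v + s • d‖ ^ 2 - f (v + s • d) with hφdef
  have hφ : ∀ s : ℝ, HasDerivAt φ ⟪L • (v + s • d) - f' (v + s • d), d⟫ s := by
    intro s
    have hline : HasDerivAt (fun s : ℝ => v + s • d) d s := by
      simpa using ((hasDerivAt_id s).smul_const d).const_add v
    have hH := (hgradH (v + s • d)).hasFDerivAt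
    have h2 : HasDerivAt φ ((toDual ℝ F (L • (v + s • d) - f' (v + s • d))) d) s :=
      by have := hH.comp_hasDerivAt s hline; exact this
    simpa only [toDual_apply_apply] using h2
  obtain ⟨c, hc, hEq⟩ := exists_hasDerivAt_eq_slope φ
    (fun s => ⟪L • (v + s • d) - f' (v + s • d), d⟫) one_pos
    (fun s _ => (hφ s).continuousAt.continuousWithinAt) (fun s _ => hφ s)
  have hmono : ⟪L • v - f' v, d⟫ ≤ ⟪L • (v + c • d) - f' (v + c • d), d⟫ := by
    set a' := v + c • d with ha'
    have hav : a' - v = c • d := by rw [ha']; abel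
    have key : 0 ≤ ⟪(L • a' - f' a') - (L • v - f' v), a' - v⟫ := by
      have h1 : ⟪f' a' - f' v, a' - v⟫ ≤ ‖f' a' - f' v‖ * ‖a' - v‖ := real_inner_le_norm _ _
      have h2 : ‖f' a' - f' v‖ ≤ L * ‖a' - v‖ := hLip _ _
      have h3 : ‖f' a' - f' v‖ * ‖a' - v‖ ≤ (L * ‖a' - v‖) * ‖a' - v‖ :=
        mul_le_mul_of_nonneg_right h2 (norm_nonneg _)
      have expand : ⟪(L • a' - f' a') - (L • v - f' v), a' - v⟫
          = L * ‖a' - v‖ ^ 2 - ⟪f' a' - f' v, a' - v⟫ := by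
        have : (L • a' - f' a') - (L • v - f' v) = L • (a' - v) - (f' a' - f' v) := by
          module
        rw [this, inner_sub_left, real_inner_smul_left, real_inner_self_eq_norm_sq]
      rw [expand]
      nlinarith [h1, h3, sq_nonneg ‖a' - v‖]
    rw [hav, real_inner_smul_right, inner_sub_left] at key
    have hcpos : 0 < c := hc.1
    nlinarith [key]
  have hφ1 : φ 1 = L / 2 * ‖v + d‖ ^ 2 - f (v + d) := by simp [hφdef]
  have hφ0 : φ 0 = L / 2 * ‖v‖ ^ 2 - f v := by simp [hφdef]
  have hslope : φ 1 - φ 0 = ⟪L • (v + c • d) - f' (v + c • d), d⟫ := by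
    rw [hEq]; norm_num
  have hud : v + d = u := by rw [hd]; abel
  have hnorm : ‖v + d‖ ^ 2 = ‖v‖ ^ 2 + 2 * ⟪v, d⟫ + ‖d‖ ^ 2 := norm_add_sq_real v d
  have h0' : ⟪L • v - f' v, d⟫ = L * ⟪v, d⟫ - ⟪f' v, d⟫ := by
    rw [inner_sub_left, real_inner_smul_left]
  rw [hnorm] at hφ1
  rw [hud] at hφ1
  linarith [hmono, hslope, hφ1, hφ0, h0']

lemma aux_strong_min {s : Set F} {m : ℝ} {f : F → ℝ} (hsc : StrongConvexOn s m f)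
    {a z : F} (ha : a ∈ s) (hz : z ∈ s) (hmin : ∀ w ∈ s, f a ≤ f w) :
    f a + m / 2 * ‖z - a‖ ^ 2 ≤ f z := by
  set c := m / 2 * ‖a - z‖ ^ 2 with hc
  have key : ∀ θ : ℝ, 0 < θ → θ < 1 → f a ≤ f z - θ * c := by
    intro θ h0 h1
    have hmem : θ • a + (1 - θ) • z ∈ s :=
      hsc.1 ha hz (le_of_lt h0) (by linarith) (by ring)
    have h2 := hsc.2 ha hz (le_of_lt h0) (show (0:ℝ) ≤ 1 - θ by linarith) (by ring)
    rw [smul_eq_mul, smul_eq_mul] at h2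
    have h2' : f (θ • a + (1 - θ) • z) ≤ θ * f a + (1 - θ) * f z - θ * (1 - θ) * (m / 2 * ‖a - z‖ ^ 2) := h2
    have h3 := hmin _ hmem
    have h4 : (1 - θ) * (f a) ≤ (1 - θ) * (f z - θ * c) := by rw [hc]; nlinarith [h2', h3]
    exact le_of_mul_le_mul_left h4 (by linarith)
  have hT : Tendsto (fun n : ℕ => f z - (1 - 1 / ((n : ℝ) + 2)) * c) atTop
      (𝓝 (f z - (1 - 0) * c)) := by
    apply Tendsto.const_sub
    apply Tendsto.mul_const
    apply Tendsto.const_sub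
    have h5 : Tendsto (fun n : ℕ => ((n : ℝ) + 2)) atTop atTop :=
      tendsto_atTop_add_const_right atTop 2 tendsto_natCast_atTop_atTop
    simpa [one_div, Pi.inv_def] using h5.inv_tendsto_atTop
  have hθn : ∀ n : ℕ, f a ≤ f z - (1 - 1 / ((n : ℝ) + 2)) * c := by
    intro n
    have hpos : (0:ℝ) < (n : ℝ) + 2 := by positivity
    have hlt : 1 / ((n : ℝ) + 2) < 1 := by
      rw [div_lt_one hpos]; linarith [Nat.cast_nonneg (α := ℝ) n]
    have hgt : (0:ℝ) < 1 / ((n : ℝ) + 2) := by positivity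
    exact key _ (by linarith) (by linarith)
  have hle := ge_of_tendsto' hT hθn
  have hnr : ‖a - z‖ = ‖z - a‖ := norm_sub_rev a z
  rw [hc, hnr] at hle
  linarith [hle]

lemma aux_affine {m : ℝ} {f : F → ℝ} (h : StrongConvexOn Set.univ m f) (b : F) (c : ℝ) :
    StrongConvexOn Set.univ m (fun z => f z + ⟪b, z⟫ + c) := by
  refine ⟨h.1, fun p hp q hq a a' ha ha' hab => ?_⟩
  have h2 := h.2 hp hq ha ha' hab
  simp only [smul_eq_mul] at h2 ⊢
  have hi : ⟪b, a • p + a' • q⟫ = a * ⟪b, p⟫ + a' * ⟪b, q⟫ := by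
    rw [inner_add_right, real_inner_smul_right, real_inner_smul_right]
  have hcc : a * c + a' * c = c := by rw [← add_mul, hab, one_mul]
  rw [hi]
  linarith [h2]

end aux

/-- Augmented Lagrangian for the reformulated sharing problem:
`L({x_k}, x_0; y) = Σ_k g_k(x_k) + ℓ(x_0) + ⟨x_0 − Σ_k A_k x_k, y⟩
  + (ρ/2)‖x_0 − Σ_k A_k x_k‖²`. -/
noncomputable def augLs {M K : ℕ} {Nv : Fin K → ℕ}
    (g : ∀ k : Fin K, EuclideanSpace ℝ (Fin (Nv k)) → ℝ)
    (l : EuclideanSpace ℝ (Fin M) → ℝ) (ρ : ℝ)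
    (A : ∀ k : Fin K, EuclideanSpace ℝ (Fin (Nv k)) →L[ℝ] EuclideanSpace ℝ (Fin M))
    (xk : ∀ k : Fin K, EuclideanSpace ℝ (Fin (Nv k)))
    (x0 y : EuclideanSpace ℝ (Fin M)) : ℝ :=
  (∑ k, g k (xk k)) + l x0 + ⟪x0 - ∑ k, A k (xk k), y⟫
    + ρ / 2 * ‖x0 - ∑ k, A k (xk k)‖ ^ 2

lemma augLs_rep {M K : ℕ} {Nv : Fin K → ℕ}
    (g : ∀ k : Fin K, EuclideanSpace ℝ (Fin (Nv k)) → ℝ)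
    (l : EuclideanSpace ℝ (Fin M) → ℝ) (ρ : ℝ)
    (A : ∀ k : Fin K, EuclideanSpace ℝ (Fin (Nv k)) →L[ℝ] EuclideanSpace ℝ (Fin M))
    (xk : ∀ k : Fin K, EuclideanSpace ℝ (Fin (Nv k)))
    (x0 y : EuclideanSpace ℝ (Fin M)) (k : Fin K) :
    augLs g l ρ A xk x0 y =
      ((∑ j ∈ Finset.univ.erase k, g j (xk j)) + l x0
        + ⟪x0 - ∑ j ∈ Finset.univ.erase k, A j (xk j), y⟫)
      + ((g k (xk k) - ⟪y, A k (xk k)⟫)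
        + ρ / 2 * ‖(x0 - ∑ j ∈ Finset.univ.erase k, A j (xk j)) - A k (xk k)‖ ^ 2) := by
  have h1 : (∑ j, g j (xk j)) = (∑ j ∈ Finset.univ.erase k, g j (xk j)) + g k (xk k) :=
    (Finset.sum_erase_add _ _ (Finset.mem_univ k)).symm
  have h2 : (∑ j, A j (xk j)) = (∑ j ∈ Finset.univ.erase k, A j (xk j)) + A k (xk k) :=
    (Finset.sum_erase_add _ _ (Finset.mem_univ k)).symm
  rw [augLs, h1, h2, sub_add_eq_sub_sub, inner_sub_left, real_inner_comm (A k (xk k)) y]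
  ring

/-- **Lemma 4.3.**  For the flexible ADMM (Algorithm 4) on the sharing problem, under
Assumption C, for every `t ≥ 1`:
`L^{t+1} ≥ Σ_k g_k(x_k^{t+1}) + ℓ(Σ_k A_k x_k^{t+1}) + ((ρ − L)/2)‖x_0^{t+1} − Σ_k A_k x_k^{t+1}‖²
   ≥ f̄`; consequently `t ↦ L^t` is nonincreasing for `t ≥ 1` and converges to a limit `≥ f̄`. -/
theorem lemma4_3
    {M K : ℕ} {Nv : Fin K → ℕ} (hK : 1 ≤ K)
    (g : ∀ k : Fin K, EuclideanSpace ℝ (Fin (Nv k)) → ℝ)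
    (l : EuclideanSpace ℝ (Fin M) → ℝ)
    (l' : EuclideanSpace ℝ (Fin M) → EuclideanSpace ℝ (Fin M))
    (A : ∀ k : Fin K, EuclideanSpace ℝ (Fin (Nv k)) →L[ℝ] EuclideanSpace ℝ (Fin M))
    (X : ∀ k : Fin K, Set (EuclideanSpace ℝ (Fin (Nv k))))
    (Lc ρ : ℝ)
    (x : ℕ → ∀ k : Fin K, EuclideanSpace ℝ (Fin (Nv k)))
    (x0 y : ℕ → EuclideanSpace ℝ (Fin M))
    (C : ℕ → Finset (Option (Fin K)))
    -- Assumption C1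
    (hgrad : ∀ z, HasGradientAt l (l' z) z)
    (hLpos : 0 < Lc)
    (hLip : ∀ u v, ‖l' u - l' v‖ ≤ Lc * ‖u - v‖)
    (hXne : ∀ k, (X k).Nonempty) (hXcl : ∀ k, IsClosed (X k))
    (hXcv : ∀ k, Convex ℝ (X k))
    (hA : ∀ k, Function.Injective (A k))
    (hρ : 0 < ρ)
    -- Algorithm 4
    (hC1 : C 1 = Finset.univ)
    (hxupd : ∀ (t : ℕ) (k : Fin K),
      (some k ∈ C (t + 1) → x (t + 1) k ∈ X k ∧ ∀ z ∈ X k,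
        g k (x (t + 1) k) - ⟪y t, A k (x (t + 1) k)⟫
            + ρ / 2 * ‖x0 t - (∑ j ∈ Finset.univ.filter (fun j => j < k), A j (x (t + 1) j))
                - (∑ j ∈ Finset.univ.filter (fun j => k < j), A j (x t j))
                - A k (x (t + 1) k)‖ ^ 2
          ≤ g k z - ⟪y t, A k z⟫
            + ρ / 2 * ‖x0 t - (∑ j ∈ Finset.univ.filter (fun j => j < k), A j (x (t + 1) j))
                - (∑ j ∈ Finset.univ.filter (fun j => k < j), A j (x t j))
                - A k z‖ ^ 2) ∧
      (some k ∉ C (t + 1) → x (t + 1) k = x t k))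
    (hx0upd : ∀ t : ℕ,
      (none ∈ C (t + 1) → ∀ z : EuclideanSpace ℝ (Fin M),
        l (x0 (t + 1)) + ⟪y t, x0 (t + 1)⟫
            + ρ / 2 * ‖x0 (t + 1) - ∑ k, A k (x (t + 1) k)‖ ^ 2
          ≤ l z + ⟪y t, z⟫ + ρ / 2 * ‖z - ∑ k, A k (x (t + 1) k)‖ ^ 2) ∧
      (none ∉ C (t + 1) → x0 (t + 1) = x0 t))
    (hyupd : ∀ t : ℕ,
      (none ∈ C (t + 1) →
        y (t + 1) = y t + ρ • (x0 (t + 1) - ∑ k, A k (x (t + 1) k))) ∧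
      (none ∉ C (t + 1) → y (t + 1) = y t))
    -- Assumption C2
    (γk : Fin K → ℝ) (γρ : ℝ)
    (hγkpos : ∀ k, 0 < γk k) (hγρpos : 0 < γρ)
    (hstrongk : ∀ k, StrongConvexOn (X k) (γk k)
      (fun z : EuclideanSpace ℝ (Fin (Nv k)) => g k z + ρ / 2 * ‖A k z‖ ^ 2))
    (hstrong0 : StrongConvexOn Set.univ γρ
      (fun z : EuclideanSpace ℝ (Fin M) => l z + ρ / 2 * ‖z‖ ^ 2))
    (hC2b : 2 * Lc ^ 2 < ρ * γρ) (hC2c : Lc ≤ ρ)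
    -- Assumption C4
    (KK : Finset (Fin K)) (Lgk : Fin K → ℝ)
    (gg' : ∀ k : Fin K, EuclideanSpace ℝ (Fin (Nv k)) → EuclideanSpace ℝ (Fin (Nv k)))
    (hKcvx : ∀ k ∈ KK, ConvexOn ℝ Set.univ (g k))
    (hKsm : ∀ k ∉ KK, (∀ z, HasGradientAt (g k) (gg' k z) z) ∧ 0 < Lgk k ∧
      ∀ u ∈ X k, ∀ v ∈ X k, ‖gg' k u - gg' k v‖ ≤ Lgk k * ‖u - v‖)
    -- Assumption C3 : `f` is bounded below over the feasible set
    (hbdd : BddBelow ((fun xx : ∀ k : Fin K, EuclideanSpace ℝ (Fin (Nv k)) =>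
      (∑ k, g k (xx k)) + l (∑ k, A k (xx k))) '' {xx | ∀ k, xx k ∈ X k})) :
    (∀ t : ℕ, 1 ≤ t →
      sInf ((fun xx : ∀ k : Fin K, EuclideanSpace ℝ (Fin (Nv k)) =>
            (∑ k, g k (xx k)) + l (∑ k, A k (xx k))) '' {xx | ∀ k, xx k ∈ X k})
          ≤ (∑ k, g k (x (t + 1) k)) + l (∑ k, A k (x (t + 1) k))
            + (ρ - Lc) / 2 * ‖x0 (t + 1) - ∑ k, A k (x (t + 1) k)‖ ^ 2 ∧
      (∑ k, g k (x (t + 1) k)) + l (∑ k, A k (x (t + 1) k))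
            + (ρ - Lc) / 2 * ‖x0 (t + 1) - ∑ k, A k (x (t + 1) k)‖ ^ 2
        ≤ augLs g l ρ A (x (t + 1)) (x0 (t + 1)) (y (t + 1))) ∧
    (∀ t : ℕ, 1 ≤ t →
      augLs g l ρ A (x (t + 1)) (x0 (t + 1)) (y (t + 1))
        ≤ augLs g l ρ A (x t) (x0 t) (y t)) ∧
    ∃ LcL : ℝ,
      sInf ((fun xx : ∀ k : Fin K, EuclideanSpace ℝ (Fin (Nv k)) =>
          (∑ k, g k (xx k)) + l (∑ k, A k (xx k))) '' {xx | ∀ k, xx k ∈ X k}) ≤ LcL ∧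
      Tendsto (fun t => augLs g l ρ A (x t) (x0 t) (y t)) atTop (nhds LcL) := by
  
  classical
  have hmemC1 : ∀ o : Option (Fin K), o ∈ C 1 := by
    intro o; rw [hC1]; exact Finset.mem_univ o
  have Inv1 : ∀ t : ℕ, 1 ≤ t → ∀ k, x t k ∈ X k := by
    intro t ht
    induction t, ht using Nat.le_induction with
    | base => exact fun k => ((hxupd 0 k).1 (hmemC1 (some k))).1
    | succ n hn ih =>
      intro k
      by_cases h : some k ∈ C (n + 1)
      · exact ((hxupd n k).1 h).1
      · rw [(hxupd n k).2 h]; exact ih k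
  have hkey : ∀ t : ℕ, none ∈ C (t + 1) → y (t + 1) = - l' (x0 (t + 1)) := by
    intro t hc
    have hψmin := (hx0upd t).1 hc
    have hg1 : HasGradientAt
        (fun z : EuclideanSpace ℝ (Fin M) =>
          l z + ⟪y t, z⟫ + ρ / 2 * ‖z - ∑ k, A k (x (t + 1) k)‖ ^ 2)
        (l' (x0 (t + 1)) + y t + ρ • (x0 (t + 1) - ∑ k, A k (x (t + 1) k)))
        (x0 (t + 1)) :=
      aux_gradAdd (aux_gradAdd (hgrad _) (aux_gradInner _ _)) (aux_gradQuad _ _ _)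
    have h0 := aux_gradZero hg1 (fun z => hψmin z)
    have h0' : l' (x0 (t + 1))
        + (y t + ρ • (x0 (t + 1) - ∑ k, A k (x (t + 1) k))) = 0 := by
      rw [← add_assoc]; exact h0
    rw [(hyupd t).1 hc]
    exact eq_neg_of_add_eq_zero_right h0'
  have Inv2 : ∀ t : ℕ, 1 ≤ t → y t = - l' (x0 t) := by
    intro t ht
    induction t, ht using Nat.le_induction with
    | base => exact hkey 0 (hmemC1 none)
    | succ n hn ih =>
      by_cases h : none ∈ C (n + 1)
      · exact hkey n h
      · rw [(hyupd n).2 h, (hx0upd n).2 h]; exact ih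
  -- block descent
  have blockdec : ∀ t : ℕ, 1 ≤ t →
      augLs g l ρ A (x (t + 1)) (x0 t) (y t) ≤ augLs g l ρ A (x t) (x0 t) (y t) := by
    intro t ht
    set m : ℕ → ∀ k : Fin K, EuclideanSpace ℝ (Fin (Nv k)) :=
      fun i k => if (k : ℕ) < i then x (t + 1) k else x t k with hm
    have hm0 : m 0 = x t := by funext k; simp [hm]
    have hmK : m K = x (t + 1) := by funext k; simp [hm, k.isLt]
    have step : ∀ i : ℕ,
        augLs g l ρ A (m (i + 1)) (x0 t) (y t) ≤ augLs g l ρ A (m i) (x0 t) (y t) := by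
      intro i
      by_cases hiK : i < K
      · set k : Fin K := ⟨i, hiK⟩ with hk
        have hmik : m i k = x t k := by simp [hm, hk]
        have hmi1k : m (i + 1) k = x (t + 1) k := by simp [hm, hk]
        have hagree : ∀ j : Fin K, j ≠ k → m (i + 1) j = m i j := by
          intro j hj
          have hji : (j : ℕ) ≠ i := fun h => hj (Fin.ext h)
          by_cases h2 : (j : ℕ) < i
          · simp [hm, h2, Nat.lt_succ_of_lt h2]
          · have h3 : ¬ (j : ℕ) < i + 1 := by omega
            simp [hm, h2, h3]
        by_cases hkC : some k ∈ C (t + 1)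
        · obtain ⟨hmem, hmin⟩ := (hxupd t k).1 hkC
          have hineq := hmin (x t k) (Inv1 t ht k)
          set P := ∑ j ∈ Finset.univ.filter (fun j => j < k), A j (x (t + 1) j) with hP
          set Q := ∑ j ∈ Finset.univ.filter (fun j => k < j), A j (x t j) with hQ
          have hsplit : Finset.univ.erase k =
              Finset.univ.filter (fun j => j < k) ∪ Finset.univ.filter (fun j => k < j) := by
            ext j
            simp only [Finset.mem_erase, Finset.mem_union, Finset.mem_filter,
              Finset.mem_univ, and_true, true_and]
            constructor
            · intro h; exact lt_or_gt_of_ne h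
            · rintro (h | h)
              · exact ne_of_lt h
              · exact ne_of_gt h
          have hdisj : Disjoint (Finset.univ.filter (fun j => j < k))
              (Finset.univ.filter (fun j : Fin K => k < j)) := by
            rw [Finset.disjoint_left]
            intro a ha hb
            simp only [Finset.mem_filter] at ha hb
            exact absurd hb.2 (not_lt_of_gt ha.2)
          have he1 : ∑ j ∈ Finset.univ.erase k, A j (m i j) = P + Q := by
            rw [hsplit, Finset.sum_union hdisj, hP, hQ]
            congr 1
            · refine Finset.sum_congr rfl fun j hj => ?_
              have hjk : j < k := (Finset.mem_filter.mp hj).2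
              have : (j : ℕ) < i := hjk
              simp [hm, this]
            · refine Finset.sum_congr rfl fun j hj => ?_
              have hjk : k < j := (Finset.mem_filter.mp hj).2
              have h5 : (i : ℕ) < (j : ℕ) := hjk
              have : ¬ (j : ℕ) < i := by omega
              simp [hm, this]
          have he2 : ∑ j ∈ Finset.univ.erase k, A j (m (i + 1) j) = P + Q := by
            rw [Finset.sum_congr rfl fun j hj => by
              rw [hagree j (Finset.ne_of_mem_erase hj)]]
            exact he1
          have hgsame : ∑ j ∈ Finset.univ.erase k, g j (m (i + 1) j)
              = ∑ j ∈ Finset.univ.erase k, g j (m i j) :=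
            Finset.sum_congr rfl fun j hj => by rw [hagree j (Finset.ne_of_mem_erase hj)]
          rw [augLs_rep g l ρ A (m (i + 1)) (x0 t) (y t) k,
            augLs_rep g l ρ A (m i) (x0 t) (y t) k, he1, he2, hgsame, hmik, hmi1k]
          have hxw : x0 t - (P + Q) = x0 t - P - Q := (sub_sub _ _ _).symm
          rw [hxw]
          have := hineq
          apply add_le_add_right
          linarith [this]
        · have hxeq : x (t + 1) k = x t k := (hxupd t k).2 hkC
          have : m (i + 1) = m i := by
            funext j
            by_cases hj : j = k
            · rw [hj, hmi1k, hmik, hxeq]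
            · exact hagree j hj
          rw [this]
      · have : m (i + 1) = m i := by
          funext j
          have h1 : (j : ℕ) < i := lt_of_lt_of_le j.isLt (le_of_not_gt hiK)
          simp [hm, h1, Nat.lt_succ_of_lt h1]
        rw [this]
    have chain : ∀ i : ℕ, augLs g l ρ A (m i) (x0 t) (y t) ≤ augLs g l ρ A (m 0) (x0 t) (y t) := by
      intro i
      induction i with
      | zero => exact le_refl _
      | succ n ih => exact (step n).trans ih
    have := chain K
    rw [hm0, hmK] at this
    exact this
  -- full descent
  have partB : ∀ t : ℕ, 1 ≤ t →
      augLs g l ρ A (x (t + 1)) (x0 (t + 1)) (y (t + 1)) ≤ augLs g l ρ A (x t) (x0 t) (y t) := by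
    intro t ht
    have hblock := blockdec t ht
    by_cases hc : none ∈ C (t + 1)
    · set u := ∑ k, A k (x (t + 1) k) with hu
      have hmin := (hx0upd t).1 hc
      have hψeq : (fun z : EuclideanSpace ℝ (Fin M) => l z + ⟪y t, z⟫ + ρ / 2 * ‖z - u‖ ^ 2)
          = fun z => (l z + ρ / 2 * ‖z‖ ^ 2) + ⟪y t - ρ • u, z⟫ + ρ / 2 * ‖u‖ ^ 2 := by
        funext z
        have h6 : ‖z - u‖ ^ 2 = ‖z‖ ^ 2 - 2 * ⟪z, u⟫ + ‖u‖ ^ 2 := norm_sub_sq_real z u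
        rw [h6, inner_sub_left, real_inner_smul_left, real_inner_comm u z]
        ring
      have hψsc : StrongConvexOn Set.univ γρ
          (fun z : EuclideanSpace ℝ (Fin M) => l z + ⟪y t, z⟫ + ρ / 2 * ‖z - u‖ ^ 2) := by
        rw [hψeq]; exact aux_affine hstrong0 _ _
      have hsm := aux_strong_min hψsc (Set.mem_univ (x0 (t + 1))) (Set.mem_univ (x0 t))
        (fun w _ => hmin w)
      have hsm' : (l (x0 (t + 1)) + ⟪y t, x0 (t + 1)⟫ + ρ / 2 * ‖x0 (t + 1) - u‖ ^ 2)
          + γρ / 2 * ‖x0 t - x0 (t + 1)‖ ^ 2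
          ≤ l (x0 t) + ⟪y t, x0 t⟫ + ρ / 2 * ‖x0 t - u‖ ^ 2 := hsm
      have hrep : ∀ (z y' : EuclideanSpace ℝ (Fin M)),
          augLs g l ρ A (x (t + 1)) z y'
          = (∑ k, g k (x (t + 1) k)) + (l z + ⟪y', z⟫ + ρ / 2 * ‖z - u‖ ^ 2) - ⟪u, y'⟫ := by
        intro z y'
        rw [augLs, inner_sub_left, real_inner_comm z y']
        ring
      have hyt1 := (hyupd t).1 hc
      have hy1 : y (t + 1) = - l' (x0 (t + 1)) := hkey t hc
      have hy0 : y t = - l' (x0 t) := Inv2 t ht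
      have hynorm : ‖y (t + 1) - y t‖ ≤ Lc * ‖x0 (t + 1) - x0 t‖ := by
        rw [hy1, hy0, neg_sub_neg]
        rw [norm_sub_rev]
        exact hLip _ _
      have hx0u : x0 (t + 1) - u = ρ⁻¹ • (y (t + 1) - y t) := by
        rw [hyt1, add_sub_cancel_left, smul_smul, inv_mul_cancel₀ (ne_of_gt hρ), one_smul]
      have hpiece3 : augLs g l ρ A (x (t + 1)) (x0 (t + 1)) (y (t + 1))
          = augLs g l ρ A (x (t + 1)) (x0 (t + 1)) (y t) + ρ⁻¹ * ‖y (t + 1) - y t‖ ^ 2 := by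
        rw [hrep, hrep]
        have e1 : ⟪y (t + 1), x0 (t + 1)⟫ - ⟪u, y (t + 1)⟫ - (⟪y t, x0 (t + 1)⟫ - ⟪u, y t⟫)
            = ⟪y (t + 1) - y t, x0 (t + 1) - u⟫ := by
          have c1 : ⟪u, y (t + 1)⟫ = ⟪y (t + 1), u⟫ := real_inner_comm _ _
          have c2 : ⟪u, y t⟫ = ⟪y t, u⟫ := real_inner_comm _ _
          rw [inner_sub_left, inner_sub_right, inner_sub_right, c1, c2]
        have e2 : ⟪y (t + 1) - y t, x0 (t + 1) - u⟫ = ρ⁻¹ * ‖y (t + 1) - y t‖ ^ 2 := by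
          rw [hx0u, real_inner_smul_right, real_inner_self_eq_norm_sq]
        linarith [e1, e2]
      have hpiece2 : augLs g l ρ A (x (t + 1)) (x0 (t + 1)) (y t)
          + γρ / 2 * ‖x0 t - x0 (t + 1)‖ ^ 2
          ≤ augLs g l ρ A (x (t + 1)) (x0 t) (y t) := by
        rw [hrep, hrep]
        linarith [hsm']
      have hfinal : ρ⁻¹ * ‖y (t + 1) - y t‖ ^ 2 ≤ (Lc ^ 2 / ρ) * ‖x0 (t + 1) - x0 t‖ ^ 2 := by
        have h1 : ‖y (t + 1) - y t‖ ^ 2 ≤ (Lc * ‖x0 (t + 1) - x0 t‖) ^ 2 :=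
          pow_le_pow_left₀ (norm_nonneg _) hynorm 2
        have h2 : ρ⁻¹ * ‖y (t + 1) - y t‖ ^ 2 ≤ ρ⁻¹ * (Lc * ‖x0 (t + 1) - x0 t‖) ^ 2 :=
          mul_le_mul_of_nonneg_left h1 (by positivity)
        calc ρ⁻¹ * ‖y (t + 1) - y t‖ ^ 2 ≤ ρ⁻¹ * (Lc * ‖x0 (t + 1) - x0 t‖) ^ 2 := h2
          _ = (Lc ^ 2 / ρ) * ‖x0 (t + 1) - x0 t‖ ^ 2 := by field_simp
      have hγ : Lc ^ 2 / ρ ≤ γρ / 2 := by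
        rw [div_le_div_iff₀ hρ (by norm_num : (0:ℝ) < 2)]
        nlinarith [hC2b]
      have hns2 : ‖x0 t - x0 (t + 1)‖ ^ 2 = ‖x0 (t + 1) - x0 t‖ ^ 2 := by
        rw [norm_sub_rev]
      have hmul : (Lc ^ 2 / ρ) * ‖x0 (t + 1) - x0 t‖ ^ 2
          ≤ (γρ / 2) * ‖x0 (t + 1) - x0 t‖ ^ 2 :=
        mul_le_mul_of_nonneg_right hγ (sq_nonneg _)
      rw [hns2] at hpiece2
      linarith [hpiece3, hpiece2, hfinal, hmul, hblock]
    · rw [(hx0upd t).2 hc, (hyupd t).2 hc]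
      exact hblock
  -- part A
  have partA1 : ∀ t : ℕ, 1 ≤ t →
      (∑ k, g k (x (t + 1) k)) + l (∑ k, A k (x (t + 1) k))
        + (ρ - Lc) / 2 * ‖x0 (t + 1) - ∑ k, A k (x (t + 1) k)‖ ^ 2
        ≤ augLs g l ρ A (x (t + 1)) (x0 (t + 1)) (y (t + 1)) := by
    intro t ht
    set S := ∑ k, A k (x (t + 1) k) with hS
    have hyt1 : y (t + 1) = - l' (x0 (t + 1)) := Inv2 (t + 1) (by omega)
    have hdesc := aux_descent hgrad (le_of_lt hLpos) hLip S (x0 (t + 1))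
    have e1 : ⟪x0 (t + 1) - S, y (t + 1)⟫ = ⟪l' (x0 (t + 1)), S - x0 (t + 1)⟫ := by
      rw [hyt1, inner_neg_right, ← inner_neg_left, neg_sub, real_inner_comm]
    have e2 : ‖S - x0 (t + 1)‖ = ‖x0 (t + 1) - S‖ := norm_sub_rev _ _
    rw [augLs, ← hS, e1]
    rw [e2] at hdesc
    linarith [hdesc]
  have partA0 : ∀ t : ℕ, 1 ≤ t →
      sInf ((fun xx : ∀ k : Fin K, EuclideanSpace ℝ (Fin (Nv k)) =>
            (∑ k, g k (xx k)) + l (∑ k, A k (xx k))) '' {xx | ∀ k, xx k ∈ X k})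
        ≤ (∑ k, g k (x (t + 1) k)) + l (∑ k, A k (x (t + 1) k))
          + (ρ - Lc) / 2 * ‖x0 (t + 1) - ∑ k, A k (x (t + 1) k)‖ ^ 2 := by
    intro t ht
    have h1 : sInf ((fun xx : ∀ k : Fin K, EuclideanSpace ℝ (Fin (Nv k)) =>
          (∑ k, g k (xx k)) + l (∑ k, A k (xx k))) '' {xx | ∀ k, xx k ∈ X k})
        ≤ (∑ k, g k (x (t + 1) k)) + l (∑ k, A k (x (t + 1) k)) :=
      csInf_le hbdd ⟨x (t + 1), fun k => Inv1 (t + 1) (by omega) k, rfl⟩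
    have h2 : 0 ≤ (ρ - Lc) / 2 * ‖x0 (t + 1) - ∑ k, A k (x (t + 1) k)‖ ^ 2 :=
      mul_nonneg (by linarith) (sq_nonneg _)
    linarith
  refine ⟨fun t ht => ⟨partA0 t ht, partA1 t ht⟩, partB, ?_⟩
  -- convergence
  have hlow : ∀ n : ℕ, sInf ((fun xx : ∀ k : Fin K, EuclideanSpace ℝ (Fin (Nv k)) =>
        (∑ k, g k (xx k)) + l (∑ k, A k (xx k))) '' {xx | ∀ k, xx k ∈ X k})
      ≤ augLs g l ρ A (x (n + 2)) (x0 (n + 2)) (y (n + 2)) := fun n =>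
    le_trans (partA0 (n + 1) (by omega)) (partA1 (n + 1) (by omega))
  have hanti : Antitone (fun n : ℕ => augLs g l ρ A (x (n + 2)) (x0 (n + 2)) (y (n + 2))) :=
    antitone_nat_of_succ_le fun n => partB (n + 2) (by omega)
  have hbb : BddBelow (Set.range fun n : ℕ =>
      augLs g l ρ A (x (n + 2)) (x0 (n + 2)) (y (n + 2))) := by
    refine ⟨sInf ((fun xx : ∀ k : Fin K, EuclideanSpace ℝ (Fin (Nv k)) =>
        (∑ k, g k (xx k)) + l (∑ k, A k (xx k))) '' {xx | ∀ k, xx k ∈ X k}), ?_⟩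
    rintro v ⟨n, rfl⟩
    exact hlow n
  have hconv := tendsto_atTop_ciInf hanti hbb
  refine ⟨⨅ n : ℕ, augLs g l ρ A (x (n + 2)) (x0 (n + 2)) (y (n + 2)),
    le_ciInf hlow, ?_⟩
  exact (tendsto_add_atTop_iff_nat 2).mp hconv
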